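/- arXiv:1007.1220 — 4 statements merged into one kernel-verified Lean document; each statement's English description precedes it below -/
import Mathlib

section
/- Let H be the orthocentre of triangle ABC and Σ any circle through H. If lines AH, BH, CH meet Σ again at X, Y, Z respectively, then triangle XYZ is indirectly similar to triangle ABC (Hagge's theorem). -/
open EuclideanGeometry Real Complex RealInnerProductSpace

open ComplexConjugate in
private lemma hagge_line_extract (P H X : ℂ) (hX : X ∈ affineSpan ℝ ({P, H} : Set ℂ)) :
    ∃ u : ℝ, X - H = (u : ℂ) * (P - H) := by
  have h2 : X ∈ line[ℝ, P, H] := hX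
  rw [show X = (X - P) +ᵥ P by simp, vadd_left_mem_affineSpan_pair] at h2
  obtain ⟨t, ht⟩ := h2
  refine ⟨1 - t, ?_⟩
  simp only [vsub_eq_sub, Complex.real_smul] at ht
  push_cast
  linear_combination -ht

open ComplexConjugate in
private lemma hagge_chord (O H P Q : ℂ) (r : ℝ) (hHs : H ∈ Metric.sphere O r)
    (hQs : Q ∈ Metric.sphere O r) (hQ : Q ∈ affineSpan ℝ ({P, H} : Set ℂ))
    (hne : Q ≠ H) (hP : P ≠ H) :
    (Q - O) * conj (P - H) = -(conj (H - O)) * (P - H) := by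
  obtain ⟨u, hu⟩ := hagge_line_extract P H Q hQ
  have hPH : P - H ≠ 0 := sub_ne_zero.mpr hP
  have hu0 : (u : ℂ) ≠ 0 := by
    intro h0
    rw [h0, zero_mul] at hu
    exact hne (sub_eq_zero.mp hu)
  have habs : ‖Q - O‖ = ‖H - O‖ := by
    have h1 : ‖Q - O‖ = r := by simpa [Complex.dist_eq] using hQs
    have h2 : ‖H - O‖ = r := by simpa [Complex.dist_eq] using hHs
    rw [h1, h2]
  have hsq : (Q - O) * conj (Q - O) = (H - O) * conj (H - O) := by
    rw [Complex.mul_conj, Complex.mul_conj, Complex.normSq_eq_norm_sq, Complex.normSq_eq_norm_sq, habs]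
  have hQc : conj (Q - H) = (u : ℂ) * conj (P - H) := by
    rw [hu, map_mul, Complex.conj_ofReal]
  have e1 : Q - O = (u : ℂ) * (P - H) + (H - O) := by linear_combination hu
  have e2 : conj (Q - O) = (u : ℂ) * conj (P - H) + conj (H - O) := by
    rw [show Q - O = (Q - H) + (H - O) by ring, map_add, hQc]
  rw [e2, e1] at hsq
  have key : (u : ℂ) * ((u : ℂ) * ((P - H) * conj (P - H)) +
      ((H - O) * conj (P - H) + conj (H - O) * (P - H))) = 0 := by
    linear_combination hsq
  have key2 : (u : ℂ) * ((P - H) * conj (P - H)) +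
      ((H - O) * conj (P - H) + conj (H - O) * (P - H)) = 0 :=
    (mul_eq_zero.mp key).resolve_left hu0
  rw [e1]
  linear_combination key2

/-- Hagge's theorem: if lines AH, BH, CH through the orthocentre H meet a circle
Σ through H again at X, Y, Z, then XYZ is indirectly similar to ABC. -/
theorem hagge_circle_indirect_similarity (A B C H X Y Z O : ℂ) (r : ℝ)
    (hnd : AffineIndependent ℝ ![A, B, C])
    (hH1 : inner ℝ (H - A) (B - C) = (0 : ℝ)) (hH2 : inner ℝ (H - B) (C - A) = (0 : ℝ))
    (hr : 0 < r) (hHSig : H ∈ Metric.sphere O r)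
    (hXSig : X ∈ Metric.sphere O r) (hYSig : Y ∈ Metric.sphere O r)
    (hZSig : Z ∈ Metric.sphere O r)
    (hX : X ∈ affineSpan ℝ ({A, H} : Set ℂ)) (hXne : X ≠ H)
    (hY : Y ∈ affineSpan ℝ ({B, H} : Set ℂ)) (hYne : Y ≠ H)
    (hZ : Z ∈ affineSpan ℝ ({C, H} : Set ℂ)) (hZne : Z ≠ H) :
    ∃ α β : ℂ, α ≠ 0 ∧
      α * (starRingEnd ℂ) A + β = X ∧
      α * (starRingEnd ℂ) B + β = Y ∧
      α * (starRingEnd ℂ) C + β = Z := by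
  have hAH : A ≠ H := by
    rintro rfl
    obtain ⟨u, hu⟩ := hagge_line_extract A A X hX
    simp only [sub_self, mul_zero] at hu
    exact hXne (sub_eq_zero.mp hu)
  have hBH : B ≠ H := by
    rintro rfl
    obtain ⟨u, hu⟩ := hagge_line_extract B B Y hY
    simp only [sub_self, mul_zero] at hu
    exact hYne (sub_eq_zero.mp hu)
  have hCH : C ≠ H := by
    rintro rfl
    obtain ⟨u, hu⟩ := hagge_line_extract C C Z hZ
    simp only [sub_self, mul_zero] at hu
    exact hZne (sub_eq_zero.mp hu)
  have eX := hagge_chord O H A X r hHSig hXSig hX hXne hAH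
  have eY := hagge_chord O H B Y r hHSig hYSig hY hYne hBH
  have eZ := hagge_chord O H C Z r hHSig hZSig hZ hZne hCH
  have ha : A - H ≠ 0 := sub_ne_zero.mpr hAH
  have hb : B - H ≠ 0 := sub_ne_zero.mpr hBH
  have hc : C - H ≠ 0 := sub_ne_zero.mpr hCH
  have hconj_ne : ∀ z : ℂ, z ≠ 0 → (starRingEnd ℂ) z ≠ 0 := fun z hz h =>
    hz (by simpa using congrArg (starRingEnd ℂ) h)
  have hpa : (starRingEnd ℂ) A - (starRingEnd ℂ) H ≠ 0 := by
    rw [← map_sub]; exact hconj_ne _ ha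
  have hpb : (starRingEnd ℂ) B - (starRingEnd ℂ) H ≠ 0 := by
    rw [← map_sub]; exact hconj_ne _ hb
  have hpc : (starRingEnd ℂ) C - (starRingEnd ℂ) H ≠ 0 := by
    rw [← map_sub]; exact hconj_ne _ hc
  have hHO : H - O ≠ 0 := by
    intro h
    have h1 : ‖H - O‖ = r := by simpa [Complex.dist_eq] using hHSig
    rw [h] at h1
    simp at h1
    exact absurd h1.symm (ne_of_gt hr)
  have hw : (starRingEnd ℂ) H - (starRingEnd ℂ) O ≠ 0 := by
    rw [← map_sub]; exact hconj_ne _ hHO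
  have hAB : A ≠ B := by
    intro h
    have h2 : (0 : Fin 3) = 1 := hnd.injective (by simp [h])
    simp at h2
  -- orthocentre conditions as complex equations
  have h1c : (starRingEnd ℂ) (H - A) * (B - C) + (H - A) * (starRingEnd ℂ) (B - C) = 0 := by
    have hre : ((starRingEnd ℂ) (H - A) * (B - C)).re = 0 := by
      rw [mul_comm]; exact (Complex.inner _ _).symm.trans hH1
    have h := Complex.add_conj ((starRingEnd ℂ) (H - A) * (B - C))
    rw [hre] at h
    simp only [map_mul, Complex.conj_conj] at h
    simpa using h
  have h2c : (starRingEnd ℂ) (H - B) * (C - A) + (H - B) * (starRingEnd ℂ) (C - A) = 0 := by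
    have hre : ((starRingEnd ℂ) (H - B) * (C - A)).re = 0 := by
      rw [mul_comm]; exact (Complex.inner _ _).symm.trans hH2
    have h := Complex.add_conj ((starRingEnd ℂ) (H - B) * (C - A))
    rw [hre] at h
    simp only [map_mul, Complex.conj_conj] at h
    simpa using h
  simp only [map_sub] at eX eY eZ h1c h2c
  -- difference formulas
  have hXY : (X - Y) * (((starRingEnd ℂ) A - (starRingEnd ℂ) H) * ((starRingEnd ℂ) B - (starRingEnd ℂ) H)) =
      -(((starRingEnd ℂ) H - (starRingEnd ℂ) O)) *
        ((A - H) * ((starRingEnd ℂ) B - (starRingEnd ℂ) H) - (B - H) * ((starRingEnd ℂ) A - (starRingEnd ℂ) H)) := by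
    linear_combination (((starRingEnd ℂ) B - (starRingEnd ℂ) H)) * eX - (((starRingEnd ℂ) A - (starRingEnd ℂ) H)) * eY
  have hXZ : (X - Z) * (((starRingEnd ℂ) A - (starRingEnd ℂ) H) * ((starRingEnd ℂ) C - (starRingEnd ℂ) H)) =
      -(((starRingEnd ℂ) H - (starRingEnd ℂ) O)) *
        ((A - H) * ((starRingEnd ℂ) C - (starRingEnd ℂ) H) - (C - H) * ((starRingEnd ℂ) A - (starRingEnd ℂ) H)) := by
    linear_combination (((starRingEnd ℂ) C - (starRingEnd ℂ) H)) * eX - (((starRingEnd ℂ) A - (starRingEnd ℂ) H)) * eZ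
  -- X ≠ Y
  have hXYne : X ≠ Y := by
    intro hxy
    have h0 : ((starRingEnd ℂ) H - (starRingEnd ℂ) O) *
        ((A - H) * ((starRingEnd ℂ) B - (starRingEnd ℂ) H) - (B - H) * ((starRingEnd ℂ) A - (starRingEnd ℂ) H)) = 0 := by
      rw [hxy] at hXY
      linear_combination hXY
    have hR1 : (A - H) * ((starRingEnd ℂ) B - (starRingEnd ℂ) H) - (B - H) * ((starRingEnd ℂ) A - (starRingEnd ℂ) H) = 0 :=
      (mul_eq_zero.mp h0).resolve_left hw
    have key : (((starRingEnd ℂ) A - (starRingEnd ℂ) H))^2 * (B - H) * ((B - H) - (A - H)) = 0 := by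
      linear_combination
        (((A - H) * (((starRingEnd ℂ) A - (starRingEnd ℂ) H) - ((starRingEnd ℂ) B - (starRingEnd ℂ) H) + ((starRingEnd ℂ) C - (starRingEnd ℂ) H))) / 2
          - (B - H) * ((starRingEnd ℂ) A - (starRingEnd ℂ) H)) * hR1
        - ((A - H) * ((starRingEnd ℂ) B - (starRingEnd ℂ) H) / 2) * h1c
        - ((A - H) * ((starRingEnd ℂ) A - (starRingEnd ℂ) H) / 2) * h2c
    have hba : (B - H) - (A - H) ≠ 0 := by
      rw [show (B - H) - (A - H) = B - A by ring]
      exact sub_ne_zero.mpr hAB.symm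
    exact (mul_ne_zero (mul_ne_zero (pow_ne_zero 2 hpa) hb) hba) key
  set α : ℂ := (X - Y) / ((starRingEnd ℂ) A - (starRingEnd ℂ) B) with hαdef
  have hden : (starRingEnd ℂ) A - (starRingEnd ℂ) B ≠ 0 := by
    rw [← map_sub]
    exact hconj_ne _ (sub_ne_zero.mpr hAB)
  have hα : α ≠ 0 := div_ne_zero (sub_ne_zero.mpr hXYne) hden
  have hαXY : α * ((starRingEnd ℂ) A - (starRingEnd ℂ) B) = X - Y := div_mul_cancel₀ _ hden
  -- main identity
  have hmain : (X - Z) * (((starRingEnd ℂ) A - (starRingEnd ℂ) H) - ((starRingEnd ℂ) B - (starRingEnd ℂ) H)) *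
      (((starRingEnd ℂ) A - (starRingEnd ℂ) H) * ((starRingEnd ℂ) B - (starRingEnd ℂ) H) * ((starRingEnd ℂ) C - (starRingEnd ℂ) H)) =
      (X - Y) * (((starRingEnd ℂ) A - (starRingEnd ℂ) H) - ((starRingEnd ℂ) C - (starRingEnd ℂ) H)) *
      (((starRingEnd ℂ) A - (starRingEnd ℂ) H) * ((starRingEnd ℂ) B - (starRingEnd ℂ) H) * ((starRingEnd ℂ) C - (starRingEnd ℂ) H)) := by
    linear_combination
      (((starRingEnd ℂ) B - (starRingEnd ℂ) H) * (((starRingEnd ℂ) A - (starRingEnd ℂ) H) - ((starRingEnd ℂ) B - (starRingEnd ℂ) H))) * hXZ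
      - (((starRingEnd ℂ) C - (starRingEnd ℂ) H) * (((starRingEnd ℂ) A - (starRingEnd ℂ) H) - ((starRingEnd ℂ) C - (starRingEnd ℂ) H))) * hXY
      + (((starRingEnd ℂ) H - (starRingEnd ℂ) O) * (((starRingEnd ℂ) A - (starRingEnd ℂ) H) * ((starRingEnd ℂ) B - (starRingEnd ℂ) H)
          - ((starRingEnd ℂ) B - (starRingEnd ℂ) H) * ((starRingEnd ℂ) C - (starRingEnd ℂ) H))) * h1c
      + (((starRingEnd ℂ) H - (starRingEnd ℂ) O) * (((starRingEnd ℂ) A - (starRingEnd ℂ) H) * ((starRingEnd ℂ) B - (starRingEnd ℂ) H)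
          - ((starRingEnd ℂ) A - (starRingEnd ℂ) H) * ((starRingEnd ℂ) C - (starRingEnd ℂ) H))) * h2c
  have hmain2 : (X - Z) * ((starRingEnd ℂ) A - (starRingEnd ℂ) B) =
      (X - Y) * ((starRingEnd ℂ) A - (starRingEnd ℂ) C) := by
    have hps := mul_ne_zero (mul_ne_zero hpa hpb) hpc
    have h := mul_right_cancel₀ hps hmain
    linear_combination h
  have hαXZ : α * ((starRingEnd ℂ) A - (starRingEnd ℂ) C) = X - Z := by
    rw [hαdef, div_mul_eq_mul_div, div_eq_iff hden]
    linear_combination -hmain2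
  refine ⟨α, X - α * (starRingEnd ℂ) A, hα, by ring, ?_, ?_⟩
  · linear_combination -hαXY
  · linear_combination -hαXZ
end

section
/- If an orientation-reversing similarity f maps triangle ABC to triangle XYZ, then for each pair of corresponding sides (e.g. BC and YZ) the internal and external bisector directions of the angle between the lines BC and YZ are parallel to the two axes of f, which are the same for all pairs of corresponding sides. -/
/-- If an orientation-reversing similarity f(z) = α·conj z + β maps A↦X, B↦Y, C↦Z,
then for each pair of corresponding sides the product of direction vectors is a
positive real multiple of α (hence the bisector directions of corresponding sides
agree for all pairs), and a line through the fixed point p with direction w is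
invariant under f iff w² is a nonzero real multiple of α : the axes of f. -/
theorem axes_of_indirect_similarity (α β A B C X Y Z : ℂ)
    (hα : α ≠ 0) (hk : ‖α‖ ≠ 1)
    (hnd : AffineIndependent ℝ ![A, B, C])
    (hX : α * (starRingEnd ℂ) A + β = X)
    (hY : α * (starRingEnd ℂ) B + β = Y)
    (hZ : α * (starRingEnd ℂ) C + β = Z) :
    (∃ t : ℝ, 0 < t ∧ (C - B) * (Z - Y) = (t : ℂ) * α) ∧
    (∃ t : ℝ, 0 < t ∧ (A - C) * (X - Z) = (t : ℂ) * α) ∧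
    (∃ t : ℝ, 0 < t ∧ (B - A) * (Y - X) = (t : ℂ) * α) ∧
    ∃ p : ℂ, α * (starRingEnd ℂ) p + β = p ∧
      ∀ w : ℂ, w ≠ 0 →
        ((∀ s : ℝ, ∃ s' : ℝ, α * (starRingEnd ℂ) (p + (s : ℂ) * w) + β
            = p + (s' : ℂ) * w) ↔ ∃ t : ℝ, t ≠ 0 ∧ w ^ 2 = (t : ℂ) * α) := by
  have hinj := hnd.injective
  have hCB : C ≠ B := by
    intro h
    have : (2 : Fin 3) = 1 := hinj (by simpa using h)
    simp at this
  have hAC : A ≠ C := by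
    intro h
    have : (0 : Fin 3) = 2 := hinj (by simpa using h)
    simp at this
  have hBA : B ≠ A := by
    intro h
    have : (1 : Fin 3) = 0 := hinj (by simpa using h)
    simp at this
  have key : ∀ u v : ℂ, u ≠ v →
      (u - v) * ((α * (starRingEnd ℂ) u + β) - (α * (starRingEnd ℂ) v + β))
        = (Complex.normSq (u - v) : ℂ) * α := by
    intro u v _
    have h : (u - v) * ((α * (starRingEnd ℂ) u + β) - (α * (starRingEnd ℂ) v + β))
        = ((u - v) * (starRingEnd ℂ) (u - v)) * α := by
      rw [map_sub]; ring
    rw [h, Complex.mul_conj]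
  have hCB' : C - B ≠ 0 := sub_ne_zero.mpr hCB
  have hAC' : A - C ≠ 0 := sub_ne_zero.mpr hAC
  have hBA' : B - A ≠ 0 := sub_ne_zero.mpr hBA
  refine ⟨⟨Complex.normSq (C - B), Complex.normSq_pos.mpr hCB',
      by rw [← hZ, ← hY]; exact key C B hCB⟩,
    ⟨Complex.normSq (A - C), Complex.normSq_pos.mpr hAC',
      by rw [← hX, ← hZ]; exact key A C hAC⟩,
    ⟨Complex.normSq (B - A), Complex.normSq_pos.mpr hBA',
      by rw [← hY, ← hX]; exact key B A hBA⟩, ?_⟩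
  have hns : (Complex.normSq α : ℝ) ≠ 1 := by
    intro h
    apply hk
    have h1 : ‖α‖ ^ 2 = 1 := by rw [Complex.sq_norm, h]
    nlinarith [norm_nonneg α]
  have hden : (1 : ℂ) - (Complex.normSq α : ℂ) ≠ 0 := by
    intro h
    apply hns
    have := sub_eq_zero.mp h
    exact_mod_cast this.symm
  set p : ℂ := (β + α * (starRingEnd ℂ) β) / (1 - (Complex.normSq α : ℂ)) with hp
  have hfix : α * (starRingEnd ℂ) p + β = p := by
    have hDconj : (starRingEnd ℂ) (1 - (Complex.normSq α : ℂ)) = 1 - (Complex.normSq α : ℂ) := by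
      rw [map_sub, map_one, Complex.conj_ofReal]
    have h2 : α * (starRingEnd ℂ) α = (Complex.normSq α : ℂ) := Complex.mul_conj α
    rw [hp, map_div₀, map_add, map_mul, Complex.conj_conj, hDconj]
    field_simp
    ring_nf
    linear_combination β * h2
  refine ⟨p, hfix, ?_⟩
  intro w hw
  have hw2 : (Complex.normSq w : ℝ) ≠ 0 := (Complex.normSq_pos.mpr hw).ne'
  -- The image of p + s·w is p + s·α·conj w
  have himg : ∀ s : ℝ, α * (starRingEnd ℂ) (p + (s : ℂ) * w) + β
      = p + (s : ℂ) * (α * (starRingEnd ℂ) w) := by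
    intro s
    rw [map_add, map_mul, Complex.conj_ofReal]
    calc α * ((starRingEnd ℂ) p + (s : ℂ) * (starRingEnd ℂ) w) + β
        = (α * (starRingEnd ℂ) p + β) + (s : ℂ) * (α * (starRingEnd ℂ) w) := by ring
      _ = p + (s : ℂ) * (α * (starRingEnd ℂ) w) := by rw [hfix]
  constructor
  · intro h
    obtain ⟨s', hs'⟩ := h 1
    rw [himg 1] at hs'
    have h1 : α * (starRingEnd ℂ) w = (s' : ℂ) * w := by
      have := add_left_cancel hs'
      simpa using this
    have hs'0 : s' ≠ 0 := by
      intro h0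
      rw [h0] at h1
      simp at h1
      rcases h1 with h1 | h1
      · exact hα h1
      · exact hw (by simpa using congrArg (starRingEnd ℂ) h1)
    refine ⟨Complex.normSq w / s', div_ne_zero hw2 hs'0, ?_⟩
    have h2 : α * ((starRingEnd ℂ) w * w) = (s' : ℂ) * w ^ 2 := by
      rw [← mul_assoc, h1]; ring
    rw [mul_comm ((starRingEnd ℂ) w) w, Complex.mul_conj] at h2
    have hs'c : (s' : ℂ) ≠ 0 := by exact_mod_cast hs'0
    rw [Complex.ofReal_div]
    field_simp
    linear_combination -h2
  · rintro ⟨t, ht, hwt⟩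
    intro s
    refine ⟨s * Complex.normSq w / t, ?_⟩
    rw [himg s]
    congr 1
    have htc : (t : ℂ) ≠ 0 := by exact_mod_cast ht
    have hα' : α = w ^ 2 / (t : ℂ) := by field_simp; linear_combination -hwt
    rw [hα']
    rw [Complex.ofReal_div, Complex.ofReal_mul]
    field_simp
    linear_combination (s : ℂ) * Complex.mul_conj w
end

section
/- Let bH be the second intersection of the median line BG with the orthocentroidal circle of triangle ABC, and let Σ be any circle through bH. If lines A·bH, B·bH, C·bH meet Σ again at Z, Y, X respectively, then triangle XYZ is directly similar to triangle ABC. -/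
open EuclideanGeometry Real ComplexConjugate

private lemma inner0 {w z : ℂ} (h : inner ℝ w z = (0 : ℝ)) :
    conj w * z + w * conj z = 0 := by
  have h1 : (conj w * z).re = 0 := by rw [mul_comm, ← Complex.inner]; exact h
  have h2 : conj w * z + conj (conj w * z) = ((2 * (conj w * z).re : ℝ) : ℂ) :=
    Complex.add_conj _
  rw [h1] at h2
  calc conj w * z + w * conj z = conj w * z + conj (conj w * z) := by
        rw [map_mul, Complex.conj_conj]
    _ = 0 := by rw [h2]; simp

private lemma lineParam {P Q z : ℂ} (h : z ∈ affineSpan ℝ ({P, Q} : Set ℂ)) :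
    ∃ t : ℝ, z = P + (t : ℂ) * (Q - P) := by
  have h2 : (z - P) +ᵥ P ∈ line[ℝ, P, Q] := by
    simpa [vadd_eq_add, sub_add_cancel] using h
  obtain ⟨s, hs⟩ := vadd_left_mem_affineSpan_pair.mp h2
  refine ⟨s, ?_⟩
  have hs' : (s : ℂ) * (Q - P) = z - P := by
    rw [← Complex.real_smul]; simpa [vsub_eq_sub] using hs
  linear_combination -hs'

private lemma chord2 (O p P q : ℂ) (s : ℝ) (hq : q = P + (s : ℂ) * (p - P))
    (hqp : q ≠ p) (h1 : (p - O) * conj (p - O) = (q - O) * conj (q - O)) :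
    (q - O) * conj (P - p) = -(conj (p - O) * (P - p)) := by
  set τ : ℂ := 1 - (s : ℂ) with hτdef
  have hτ : τ ≠ 0 := by
    intro h0
    apply hqp
    have hs1 : (s : ℂ) = 1 := by rw [hτdef] at h0; linear_combination -h0
    rw [hq, hs1]; ring
  have hw : q - O = (p - O) + τ * (P - p) := by rw [hq, hτdef]; ring
  have hqc : conj q = conj P + (s : ℂ) * (conj p - conj P) := by
    rw [hq]; simp [map_add, map_mul, map_sub, Complex.conj_ofReal]
  have hwc : conj (q - O) = conj (p - O) + τ * conj (P - p) := by
    simp only [map_sub, hτdef]; rw [hqc]; ring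
  have hc : (q - O) * conj (q - O) = (p - O) * conj (p - O) := h1.symm
  have h1' : τ * ((p - O) * conj (P - p) + conj (p - O) * (P - p)
      + τ * ((P - p) * conj (P - p))) = 0 := by
    linear_combination hc - conj (q - O) * hw - ((p - O) + τ * (P - p)) * hwc
  have h2 : (p - O) * conj (P - p) + conj (p - O) * (P - p)
      + τ * ((P - p) * conj (P - p)) = 0 := by
    rcases mul_eq_zero.mp h1' with h | h
    · exact absurd h hτ
    · exact h
  linear_combination h2 + conj (P - p) * hw

private lemma sphere_eq {z O : ℂ} {r : ℝ} (h : z ∈ Metric.sphere O r) :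
    (z - O) * conj (z - O) = ((r : ℂ)) ^ 2 := by
  have hd : dist z O = r := Metric.mem_sphere.mp h
  rw [Complex.mul_conj]
  norm_cast
  rw [Complex.normSq_eq_norm_sq, ← Complex.dist_eq, hd]


set_option maxHeartbeats 1600000 in
/-- bH circle theorem: let bH be the second intersection of line BG with the
orthocentroidal circle; if lines A·bH, B·bH, C·bH meet a circle Σ through bH
again at Z, Y, X, then XYZ is directly similar to ABC. -/
theorem bH_circle_direct_similarity (A B C G H bH X Y Z O : ℂ) (r : ℝ)
    (hnd : AffineIndependent ℝ ![A, B, C])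
    (hG : G = (3 : ℝ)⁻¹ • (A + B + C))
    (hH1 : inner ℝ (H - A) (B - C) = (0 : ℝ)) (hH2 : inner ℝ (H - B) (C - A) = (0 : ℝ))
    (hGH : G ≠ H)
    (hline : bH ∈ affineSpan ℝ ({B, G} : Set ℂ))
    (hcirc : inner ℝ (bH - G) (bH - H) = (0 : ℝ))
    (hne : bH ≠ G)
    (hr : 0 < r) (hbH : bH ∈ Metric.sphere O r)
    (hZmem : Z ∈ Metric.sphere O r) (hZ : Z ∈ affineSpan ℝ ({A, bH} : Set ℂ)) (hZne : Z ≠ bH)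
    (hYmem : Y ∈ Metric.sphere O r) (hY : Y ∈ affineSpan ℝ ({B, bH} : Set ℂ)) (hYne : Y ≠ bH)
    (hXmem : X ∈ Metric.sphere O r) (hX : X ∈ affineSpan ℝ ({C, bH} : Set ℂ)) (hXne : X ≠ bH) :
    ∃ γ δ : ℂ, γ ≠ 0 ∧ γ * A + δ = X ∧ γ * B + δ = Y ∧ γ * C + δ = Z := by
  have hABC : ¬ Collinear ℝ ({A, B, C} : Set ℂ) :=
    affineIndependent_iff_not_collinear_set.mp hnd
  have hBA : B ≠ A := by
    intro h; apply hABC; subst h; rw [Set.insert_idem]; exact collinear_pair ℝ B C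
  have hu : B - A ≠ 0 := sub_ne_zero.mpr hBA
  have hcu : conj (B - A) ≠ 0 := by
    intro h; apply hu; simpa using congrArg conj h
  -- noncollinearity in determinant form
  have hD0 : ((conj B - conj C) * (C - A) - (B - C) * (conj C - conj A)) ≠ 0 := by
    intro h0
    have h0' : conj (B - A) * (C - A) - (B - A) * conj (C - A) = 0 := by
      simp only [map_sub]; linear_combination h0
    apply hABC
    have hz : (((conj (B - A) * (C - A)).re : ℝ) : ℂ) = conj (B - A) * (C - A) :=
      Complex.conj_eq_iff_re.mp (by rw [map_mul, Complex.conj_conj]; linear_combination -h0')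
    have hns0 : Complex.normSq (B - A) ≠ 0 := fun h => hu (Complex.normSq_eq_zero.mp h)
    have hC : C - A = (((conj (B - A) * (C - A)).re / Complex.normSq (B - A) : ℝ) : ℂ) * (B - A) := by
      rw [Complex.ofReal_div, hz,
        show (Complex.normSq (B - A) : ℂ) = (B - A) * conj (B - A) from (Complex.mul_conj _).symm]
      rw [div_mul_eq_mul_div, eq_div_iff (mul_ne_zero hu hcu)]
      ring
    rw [collinear_iff_of_mem (Set.mem_insert A {B, C})]
    refine ⟨B - A, fun p hp => ?_⟩
    simp only [Set.mem_insert_iff, Set.mem_singleton_iff] at hp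
    rcases hp with h | h | h
    · exact ⟨0, by rw [h]; simp⟩
    · exact ⟨1, by rw [h]; simp [vadd_eq_add]⟩
    · exact ⟨(conj (B - A) * (C - A)).re / Complex.normSq (B - A),
        by rw [h, vadd_eq_add, Complex.real_smul, ← hC]; ring⟩
  have hGv : G = (A + B + C) / 3 := by
    rw [hG, Complex.real_smul]; push_cast; ring
  have hGc : conj G = (conj A + conj B + conj C) / 3 := by
    rw [hGv]; rw [map_div₀, map_add, map_add, map_ofNat]
  -- H equations
  have e1 : (conj H - conj A) * (B - C) + (H - A) * (conj B - conj C) = 0 := by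
    have := inner0 hH1; simp only [map_sub] at this; linear_combination this
  have e2 : (conj H - conj B) * (C - A) + (H - B) * (conj C - conj A) = 0 := by
    have := inner0 hH2; simp only [map_sub] at this; linear_combination this
  have hHD : H * ((conj B - conj C) * (C - A) - (B - C) * (conj C - conj A)) = ((conj A * (B - C) + A * (conj B - conj C)) * (C - A) - (conj B * (C - A) + B * (conj C - conj A)) * (B - C)) := by
    linear_combination (C - A) * e1 - (B - C) * e2
  have hKD : conj H * ((conj B - conj C) * (C - A) - (B - C) * (conj C - conj A)) = ((conj B - conj C) * (conj B * (C - A) + B * (conj C - conj A)) - (conj C - conj A) * (conj A * (B - C) + A * (conj B - conj C))) := by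
    linear_combination (conj B - conj C) * e2 - (conj C - conj A) * e1
  -- line parameter
  obtain ⟨t, htB⟩ := lineParam hline
  have hbHv : bH = B + (t : ℂ) * (((A + B + C) / 3) - B) := by rw [htB, hGv]
  have hbHc : conj bH = conj B + (t : ℂ) * (((conj A + conj B + conj C) / 3) - conj B) := by
    rw [htB]
    simp only [map_add, map_mul, map_sub, Complex.conj_ofReal, hGc]
  -- B ≠ G
  have hBG : B ≠ G := by
    intro h
    apply hD0
    have hx : C = 2 * B - A := by rw [hGv] at h; linear_combination (-3 : ℂ) * h
    have hxc : conj C = 2 * conj B - conj A := by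
      rw [hx]; rw [map_sub, map_mul, map_ofNat]
    linear_combination (conj B - conj A) * hx + (A - B) * hxc
  have hBg : B - ((A + B + C) / 3) ≠ 0 := by
    intro h; apply hBG; rw [hGv]; linear_combination h
  have hcBg : conj B - ((conj A + conj B + conj C) / 3) ≠ 0 := by
    intro h; apply hBg
    have h2 := congrArg conj h
    simp only [map_sub, map_div₀, map_add, map_ofNat, Complex.conj_conj, map_zero] at h2
    exact h2
  -- 1 - t ≠ 0
  have ht1 : (1 : ℂ) - (t : ℂ) ≠ 0 := by
    intro h
    apply hne
    have hs1 : (t : ℂ) = 1 := by linear_combination -h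
    rw [htB, hs1]; ring
  -- orthocentroidal circle equation
  have e4 : (conj bH - conj G) * (bH - H) + (bH - G) * (conj bH - conj H) = 0 := by
    have := inner0 hcirc; simp only [map_sub] at this; linear_combination this
  have h5 : ((1 : ℂ) - (t : ℂ)) * (((conj B - ((conj A + conj B + conj C) / 3)) * (B - H) + (B - ((A + B + C) / 3)) * (conj B - conj H)) - (t : ℂ) * (2 * (B - ((A + B + C) / 3)) * (conj B - ((conj A + conj B + conj C) / 3)))) = 0 := by
    rw [hbHc, hbHv, hGc, hGv] at e4
    linear_combination e4
  have hN : ((conj B - ((conj A + conj B + conj C) / 3)) * (B - H) + (B - ((A + B + C) / 3)) * (conj B - conj H)) = (t : ℂ) * (2 * (B - ((A + B + C) / 3)) * (conj B - ((conj A + conj B + conj C) / 3))) := by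
    rcases mul_eq_zero.mp h5 with h | h
    · exact absurd h ht1
    · linear_combination h
  have hti : (t : ℂ) * ((2 * (B - ((A + B + C) / 3)) * (conj B - ((conj A + conj B + conj C) / 3))) * ((conj B - conj C) * (C - A) - (B - C) * (conj C - conj A))) = ((conj B - ((conj A + conj B + conj C) / 3)) * (B * ((conj B - conj C) * (C - A) - (B - C) * (conj C - conj A)) - ((conj A * (B - C) + A * (conj B - conj C)) * (C - A) - (conj B * (C - A) + B * (conj C - conj A)) * (B - C))) + (B - ((A + B + C) / 3)) * (conj B * ((conj B - conj C) * (C - A) - (B - C) * (conj C - conj A)) - ((conj B - conj C) * (conj B * (C - A) + B * (conj C - conj A)) - (conj C - conj A) * (conj A * (B - C) + A * (conj B - conj C))))) := by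
    linear_combination (-((conj B - conj C) * (C - A) - (B - C) * (conj C - conj A))) * hN - (conj B - ((conj A + conj B + conj C) / 3)) * hHD - (B - ((A + B + C) / 3)) * hKD
  have hDn0 : (2 * (B - ((A + B + C) / 3)) * (conj B - ((conj A + conj B + conj C) / 3))) ≠ 0 := mul_ne_zero (mul_ne_zero two_ne_zero hBg) hcBg
  -- circle equations
  have cbH := sphere_eq hbH
  have cZ := sphere_eq hZmem
  have cY := sphere_eq hYmem
  have cX := sphere_eq hXmem
  -- chord formulas
  obtain ⟨sZ, hsZ⟩ := lineParam hZ
  obtain ⟨sY, hsY⟩ := lineParam hY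
  obtain ⟨sX, hsX⟩ := lineParam hX
  have eqZ0 := chord2 O bH A Z sZ hsZ hZne (cbH.trans cZ.symm)
  have eqY0 := chord2 O bH B Y sY hsY hYne (cbH.trans cY.symm)
  have eqX0 := chord2 O bH C X sX hsX hXne (cbH.trans cX.symm)
  have eqZ : (Z - O) * (conj A - conj bH) = -((conj bH - conj O) * (A - bH)) := by
    simpa only [map_sub] using eqZ0
  have eqY : (Y - O) * (conj B - conj bH) = -((conj bH - conj O) * (B - bH)) := by
    simpa only [map_sub] using eqY0
  have eqX : (X - O) * (conj C - conj bH) = -((conj bH - conj O) * (C - bH)) := by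
    simpa only [map_sub] using eqX0
  -- the points A, B, C are distinct from bH
  have hAbH : A - bH ≠ 0 := by
    intro h
    apply hZne
    rw [hsZ, show A = bH from by linear_combination h]; ring
  have hBbH : B - bH ≠ 0 := by
    intro h
    apply hYne
    rw [hsY, show B = bH from by linear_combination h]; ring
  have hCbH : C - bH ≠ 0 := by
    intro h
    apply hXne
    rw [hsX, show C = bH from by linear_combination h]; ring
  have hcAbH : conj A - conj bH ≠ 0 := by
    intro h; apply hAbH
    have h2 := congrArg conj h
    simpa only [map_sub, Complex.conj_conj, map_zero] using h2
  have hcBbH : conj B - conj bH ≠ 0 := by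
    intro h; apply hBbH
    have h2 := congrArg conj h
    simpa only [map_sub, Complex.conj_conj, map_zero] using h2
  have hcCbH : conj C - conj bH ≠ 0 := by
    intro h; apply hCbH
    have h2 := congrArg conj h
    simpa only [map_sub, Complex.conj_conj, map_zero] using h2
  have hcbHO : conj bH - conj O ≠ 0 := by
    intro h
    have hbO : bH - O ≠ 0 := by
      have hd : dist bH O = r := Metric.mem_sphere.mp hbH
      intro h2
      rw [show bH = O from by linear_combination h2] at hd
      simp only [dist_self] at hd
      exact hr.ne' hd.symm
    apply hbO
    have h2 := congrArg conj h
    simpa only [map_sub, Complex.conj_conj, map_zero] using h2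
  -- the main algebraic identity
  have hM9 : ((2 * (B - ((A + B + C) / 3)) * (conj B - ((conj A + conj B + conj C) / 3))) * ((conj B - conj C) * (C - A) - (B - C) * (conj C - conj A))) * ((conj A - conj bH) * ((B - bH) * (conj C - conj bH) - (conj B - conj bH) * (C - bH)) * (C - A) - (conj B - conj bH) * ((A - bH) * (conj C - conj bH) - (conj A - conj bH) * (C - bH)) * (B - A)) = 0 := by
    rw [hbHc, hbHv]
    linear_combination (((1/9)*(C)*(C)*(conj B)*(conj C) + (-2/9)*(C)*(C)*(conj B)*(conj B) + (-1/9)*(C)*(C)*(conj A)*(conj C) + (1/3)*(C)*(C)*(conj A)*(conj B) + (-1/9)*(C)*(C)*(conj A)*(conj A) + (-1/9)*(B)*(C)*(conj C)*(conj C) + (4/9)*(B)*(C)*(conj B)*(conj B) + (2/9)*(B)*(C)*(conj A)*(conj C) + (-8/9)*(B)*(C)*(conj A)*(conj B) + (1/3)*(B)*(C)*(conj A)*(conj A) + (2/9)*(B)*(B)*(conj C)*(conj C) + (-4/9)*(B)*(B)*(conj B)*(conj C) + (4/9)*(B)*(B)*(conj A)*(conj B) + (-2/9)*(B)*(B)*(conj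 A)*(conj A) + (1/9)*(A)*(C)*(conj C)*(conj C) + (-2/9)*(A)*(C)*(conj B)*(conj C) + (2/9)*(A)*(C)*(conj A)*(conj B) + (-1/9)*(A)*(C)*(conj A)*(conj A) + (-1/3)*(A)*(B)*(conj C)*(conj C) + (8/9)*(A)*(B)*(conj B)*(conj C) + (-4/9)*(A)*(B)*(conj B)*(conj B) + (-2/9)*(A)*(B)*(conj A)*(conj C) + (1/9)*(A)*(B)*(conj A)*(conj A) + (1/9)*(A)*(A)*(conj C)*(conj C) + (-1/3)*(A)*(A)*(conj B)*(conj C) + (2/9)*(A)*(A)*(conj B)*(conj B) + (1/9)*(A)*(A)*(conj A)*(conj C) + (-1/9)*(A)*(A)*(conj A)*(conj B)) * (t : ℂ)) * hti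
  have hM : (conj A - conj bH) * ((B - bH) * (conj C - conj bH) - (conj B - conj bH) * (C - bH)) * (C - A)
      = (conj B - conj bH) * ((A - bH) * (conj C - conj bH) - (conj A - conj bH) * (C - bH)) * (B - A) := by
    rcases mul_eq_zero.mp hM9 with h | h
    · exact absurd h (mul_ne_zero hDn0 hD0)
    · linear_combination h
  -- conclude the similarity relation
  have h6 : (Y - X) * (C - A) * ((conj A - conj bH) * (conj B - conj bH) * (conj C - conj bH))
      = (B - A) * (Z - X) * ((conj A - conj bH) * (conj B - conj bH) * (conj C - conj bH)) := by
    linear_combination ((conj A - conj bH) * (conj C - conj bH) * (C - A)) * eqY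
      - ((conj A - conj bH) * (conj B - conj bH) * (C - A)) * eqX
      - ((conj B - conj bH) * (conj C - conj bH) * (B - A)) * eqZ
      + ((conj A - conj bH) * (conj B - conj bH) * (B - A)) * eqX
      - (conj bH - conj O) * hM
  have hsim : (Y - X) * (C - A) = (B - A) * (Z - X) :=
    mul_right_cancel₀ (mul_ne_zero (mul_ne_zero hcAbH hcBbH) hcCbH) h6
  -- X ≠ Y
  have hXY : Y - X ≠ 0 := by
    intro h
    have h8 : (conj bH - conj O) * ((B - bH) * (conj C - conj bH) - (conj B - conj bH) * (C - bH)) = 0 := by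
      linear_combination (conj C - conj bH) * eqY - (conj B - conj bH) * eqX
        - ((conj B - conj bH) * (conj C - conj bH)) * h
    have h9 : (B - bH) * (conj C - conj bH) - (conj B - conj bH) * (C - bH) = 0 := by
      rcases mul_eq_zero.mp h8 with h' | h'
      · exact absurd h' hcbHO
      · exact h'
    rw [hbHc, hbHv] at h9
    have h10 : (t : ℂ) * ((conj B - conj C) * (C - A) - (B - C) * (conj C - conj A)) = 0 := by
      linear_combination (-3 : ℂ) * h9
    rcases mul_eq_zero.mp h10 with h' | h'
    · apply hBbH
      rw [hbHv, h']; ring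
    · exact hD0 h'
  -- final construction
  have ediv : (Y - X) / (B - A) * (B - A) = Y - X := div_mul_cancel₀ _ hu
  refine ⟨(Y - X) / (B - A), X - (Y - X) / (B - A) * A, div_ne_zero hXY hu, by ring, ?_, ?_⟩
  · linear_combination ediv
  · have e3 : (Y - X) / (B - A) * (C - A) * (B - A) = (Z - X) * (B - A) := by
      linear_combination (C - A) * ediv + hsim
    linear_combination mul_right_cancel₀ hu e3
end

section
/- Let Σ be a circle meeting the circumcircle of triangle ABC at a point J, and let X, Y, Z be points of Σ. Define A′, B′, C′ as the second intersections of lines JX, JY, JZ with the circumcircle. Then triangle A′B′C′ is directly similar to triangle XYZ. -/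
open EuclideanGeometry Real

private lemma wood_key (u v w t : ℂ) (hw : w ≠ 0) (ht : t ≠ 0)
    (h1 : w * (starRingEnd ℂ) w + (starRingEnd ℂ) v * w + v * (starRingEnd ℂ) w = 0)
    (h2 : t ^ 2 * (w * (starRingEnd ℂ) w) +
      t * ((starRingEnd ℂ) u * w + u * (starRingEnd ℂ) w) = 0) :
    t * w * (starRingEnd ℂ) v = (starRingEnd ℂ) u * (w + v) - u * (starRingEnd ℂ) v := by
  have h2' : t * (w * (starRingEnd ℂ) w) +
      ((starRingEnd ℂ) u * w + u * (starRingEnd ℂ) w) = 0 := by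
    apply mul_left_cancel₀ ht
    linear_combination h2
  have hm : (t * w * (starRingEnd ℂ) v -
      ((starRingEnd ℂ) u * (w + v) - u * (starRingEnd ℂ) v)) * w = 0 := by
    linear_combination t * w * h1 + u * h1 - (w + v) * h2'
  rcases mul_eq_zero.mp hm with h | h
  · exact sub_eq_zero.mp h
  · exact absurd h hw

private lemma norm_eq_mul_conj {a b : ℂ} (h : ‖a‖ = ‖b‖) :
    a * (starRingEnd ℂ) a = b * (starRingEnd ℂ) b := by
  rw [Complex.mul_conj, Complex.mul_conj]
  norm_cast
  rw [Complex.normSq_eq_norm_sq, Complex.normSq_eq_norm_sq, h]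

private lemma wood_aux (O O' J X P : ℂ) (r r' : ℝ) (hr : 0 < r) (hr' : 0 < r')
    (hJ : J ∈ Metric.sphere O r) (hJ' : J ∈ Metric.sphere O' r')
    (hX : X ∈ Metric.sphere O' r') (hXJ : X ≠ J)
    (hP : P ∈ Metric.sphere O r) (hPline : P ∈ affineSpan ℝ ({J, X} : Set ℂ))
    (hPne : P ≠ J) :
    (starRingEnd ℂ) (J - O) / (starRingEnd ℂ) (J - O') * X +
      (J + (starRingEnd ℂ) (J - O) / (starRingEnd ℂ) (J - O') * ((J - O') - J) - (J - O)) = P := by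
  set u := J - O with hu_def
  set v := J - O' with hv_def
  set w := X - J with hw_def
  have hv : v ≠ 0 := by
    intro h
    rw [mem_sphere_iff_norm] at hJ'
    rw [← hv_def, h, norm_zero] at hJ'
    exact absurd hJ'.symm (ne_of_gt hr')
  have hcv : (starRingEnd ℂ) v ≠ 0 := by simpa using hv
  have hw : w ≠ 0 := sub_ne_zero.mpr hXJ
  have hline : (P - J) +ᵥ J ∈ affineSpan ℝ ({J, X} : Set ℂ) := by
    simpa using hPline
  rw [vadd_left_mem_affineSpan_pair] at hline
  obtain ⟨t, htP⟩ := hline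
  have htP' : P = J + (t : ℂ) * w := by
    have hsub : P - J = (t : ℂ) * w := by
      rw [← htP]
      simp [Complex.real_smul, hw_def]
    linear_combination hsub
  have ht : (t : ℂ) ≠ 0 := by
    intro h
    apply hPne
    rw [htP', h, zero_mul, add_zero]
  have e1 : (w + v) * (starRingEnd ℂ) (w + v) = v * (starRingEnd ℂ) v := by
    apply norm_eq_mul_conj
    rw [mem_sphere_iff_norm] at hX hJ'
    have hwv : w + v = X - O' := by rw [hw_def, hv_def]; ring
    rw [hwv, hX, ← hJ']
  have e2 : (u + (t : ℂ) * w) * (starRingEnd ℂ) (u + (t : ℂ) * w) =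
      u * (starRingEnd ℂ) u := by
    apply norm_eq_mul_conj
    rw [mem_sphere_iff_norm] at hP hJ
    have huw : u + (t : ℂ) * w = P - O := by rw [hu_def, htP']; ring
    rw [huw, hP, ← hJ]
  have h1 : w * (starRingEnd ℂ) w + (starRingEnd ℂ) v * w + v * (starRingEnd ℂ) w = 0 := by
    simp only [map_add] at e1
    linear_combination e1
  have h2 : (t : ℂ) ^ 2 * (w * (starRingEnd ℂ) w) +
      (t : ℂ) * ((starRingEnd ℂ) u * w + u * (starRingEnd ℂ) w) = 0 := by
    simp only [map_add, map_mul, Complex.conj_ofReal] at e2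
    linear_combination e2
  have key := wood_key u v w (t : ℂ) hw ht h1 h2
  rw [htP']
  have expand : (starRingEnd ℂ) u / (starRingEnd ℂ) v * X +
      (J + (starRingEnd ℂ) u / (starRingEnd ℂ) v * (v - J) - u) =
      J + ((starRingEnd ℂ) u * (w + v) - u * (starRingEnd ℂ) v) / (starRingEnd ℂ) v := by
    rw [hw_def]
    field_simp
    ring
  rw [expand, ← key]
  field_simp

/-- Wood's theorem: if a circle Σ meets the circumcircle of ABC at J, and
X, Y, Z ∈ Σ project from J to A′, B′, C′ on the circumcircle, then A′B′C′ is
directly similar to XYZ. -/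
theorem wood_projection_direct_similarity
    (A B C J X Y Z A' B' C' O O' : ℂ) (r r' : ℝ)
    (hnd : AffineIndependent ℝ ![A, B, C])
    (hr : 0 < r) (hA : A ∈ Metric.sphere O r) (hB : B ∈ Metric.sphere O r)
    (hC : C ∈ Metric.sphere O r)
    (hr' : 0 < r') (hdiff : Metric.sphere O r ≠ Metric.sphere O' r')
    (hJ : J ∈ Metric.sphere O r) (hJ' : J ∈ Metric.sphere O' r')
    (hXmem : X ∈ Metric.sphere O' r') (hYmem : Y ∈ Metric.sphere O' r')
    (hZmem : Z ∈ Metric.sphere O' r')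
    (hXJ : X ≠ J) (hYJ : Y ≠ J) (hZJ : Z ≠ J)
    (hXY : X ≠ Y) (hYZ : Y ≠ Z) (hXZ : X ≠ Z)
    (hA' : A' ∈ Metric.sphere O r) (hA'line : A' ∈ affineSpan ℝ ({J, X} : Set ℂ)) (hA'ne : A' ≠ J)
    (hB' : B' ∈ Metric.sphere O r) (hB'line : B' ∈ affineSpan ℝ ({J, Y} : Set ℂ)) (hB'ne : B' ≠ J)
    (hC' : C' ∈ Metric.sphere O r) (hC'line : C' ∈ affineSpan ℝ ({J, Z} : Set ℂ)) (hC'ne : C' ≠ J) :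
    ∃ γ δ : ℂ, γ ≠ 0 ∧ γ * X + δ = A' ∧ γ * Y + δ = B' ∧ γ * Z + δ = C' := by
  refine ⟨(starRingEnd ℂ) (J - O) / (starRingEnd ℂ) (J - O'),
    J + (starRingEnd ℂ) (J - O) / (starRingEnd ℂ) (J - O') * ((J - O') - J) - (J - O),
    ?_,
    wood_aux O O' J X A' r r' hr hr' hJ hJ' hXmem hXJ hA' hA'line hA'ne,
    wood_aux O O' J Y B' r r' hr hr' hJ hJ' hYmem hYJ hB' hB'line hB'ne,
    wood_aux O O' J Z C' r r' hr hr' hJ hJ' hZmem hZJ hC' hC'line hC'ne⟩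
  apply div_ne_zero
  · simp only [ne_eq, map_eq_zero, sub_eq_zero]
    intro h
    rw [mem_sphere_iff_norm, h, sub_self, norm_zero] at hJ
    exact absurd hJ.symm (ne_of_gt hr)
  · simp only [ne_eq, map_eq_zero, sub_eq_zero]
    intro h
    rw [mem_sphere_iff_norm, h, sub_self, norm_zero] at hJ'
    exact absurd hJ'.symm (ne_of_gt hr')
end
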